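/- Let d ∈ ℕ and let c(x) = Σ_{1≤i<j≤d} c_{ij} x_i x_j with c_{ij} ≥ 0 inducing a connected graph on {1,…,d} (i and j adjacent iff c_{ij} > 0). Fix positive constants a_1,…,a_d, set λ_{ij} = √(c_{ij} a_j / a_i), σ_{ij} = √(c_{ij} a_i / a_j), g_{ij}(x) = (1/2)(λ_{ij} x_i − σ_{ij} x_j)², and G(x) = Σ_{i<j} g_{ij}(x). For x₀ ∈ ℝ^d let H_{x₀}(x) = G(x₀) + ∇G(x₀)·(x − x₀) be the affine tangent of G at x₀. Then { x ∈ ℝ^d : G(x) = H_{x₀}(x) } = x₀ + L, where L is the one-dimensional subspace of ℝ^d spanned by a = (a_1,…,a_d). -/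

import Mathlib

open Filter

namespace MMOT

/-- `G(x) = Σ_{i<j} (1/2)(λ_{ij} x_i − σ_{ij} x_j)²` with
`λ_{ij} = √(c_{ij} a_j / a_i)` and `σ_{ij} = √(c_{ij} a_i / a_j)`. -/
noncomputable def Gfun {d : ℕ} (c : Fin d → Fin d → ℝ) (a : Fin d → ℝ)
    (x : Fin d → ℝ) : ℝ :=
  ∑ i, ∑ j, if i < j then
    (1 / 2) * (Real.sqrt (c i j * a j / a i) * x i
      - Real.sqrt (c i j * a i / a j) * x j) ^ 2
  else 0

/-- Adjacency relation of the graph induced by the coefficients `c_{ij}`, `i < j`. -/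
def AdjRel {d : ℕ} (c : Fin d → Fin d → ℝ) (i j : Fin d) : Prop :=
  (i < j ∧ 0 < c i j) ∨ (j < i ∧ 0 < c j i)

/-- The linear form `x ↦ λ_{ij} x_i − σ_{ij} x_j` as a continuous linear map. -/
noncomputable def Lmap {d : ℕ} (c : Fin d → Fin d → ℝ) (a : Fin d → ℝ) (i j : Fin d) :
    (Fin d → ℝ) →L[ℝ] ℝ :=
  Real.sqrt (c i j * a j / a i) • ContinuousLinearMap.proj i
    - Real.sqrt (c i j * a i / a j) • ContinuousLinearMap.proj j

lemma Lmap_apply {d : ℕ} (c : Fin d → Fin d → ℝ) (a : Fin d → ℝ) (i j : Fin d)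
    (x : Fin d → ℝ) :
    Lmap c a i j x = Real.sqrt (c i j * a j / a i) * x i
      - Real.sqrt (c i j * a i / a j) * x j := by
  simp [Lmap]

lemma Gfun_eq {d : ℕ} (c : Fin d → Fin d → ℝ) (a : Fin d → ℝ) (x : Fin d → ℝ) :
    Gfun c a x = ∑ i, ∑ j, if i < j then (1/2) * (Lmap c a i j x)^2 else 0 := by
  simp [Gfun, Lmap_apply]

/-- Candidate derivative of `Gfun` at `x₀`. -/
noncomputable def Dmap {d : ℕ} (c : Fin d → Fin d → ℝ) (a : Fin d → ℝ) (x₀ : Fin d → ℝ) :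
    (Fin d → ℝ) →L[ℝ] ℝ :=
  ∑ i, ∑ j, if i < j then (Lmap c a i j x₀) • (Lmap c a i j) else 0

lemma hasFDerivAt_Gfun {d : ℕ} (c : Fin d → Fin d → ℝ) (a : Fin d → ℝ) (x₀ : Fin d → ℝ) :
    HasFDerivAt (Gfun c a) (Dmap c a x₀) x₀ := by
  have hfun : Gfun c a = fun x => ∑ i, ∑ j, if i < j then (1/2) * (Lmap c a i j x)^2 else 0 :=
    funext (Gfun_eq c a)
  rw [hfun, Dmap]
  apply HasFDerivAt.fun_sum
  intro i _
  apply HasFDerivAt.fun_sum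
  intro j _
  by_cases hij : i < j
  · simp only [if_pos hij]
    have h1 := (Lmap c a i j).hasFDerivAt (x := x₀)
    have h2 := (h1.mul h1).const_mul (1/2 : ℝ)
    have h3 : (fun x => (1/2:ℝ) * (Lmap c a i j x * Lmap c a i j x))
        = fun x => (1/2) * (Lmap c a i j x)^2 := by
      ext y; ring
    simp only [Pi.mul_apply] at h2
    rw [h3] at h2
    refine h2.congr_fderiv ?_
    ext y
    simp [smul_smul]
    ring
  · simp only [if_neg hij]
    exact hasFDerivAt_const 0 x₀

lemma expand {d : ℕ} (c : Fin d → Fin d → ℝ) (a : Fin d → ℝ) (x₀ x : Fin d → ℝ) :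
    Gfun c a x = Gfun c a x₀ + Dmap c a x₀ (x - x₀)
      + ∑ i, ∑ j, if i < j then (1/2) * (Lmap c a i j (x - x₀))^2 else 0 := by
  have hD : Dmap c a x₀ (x - x₀)
      = ∑ i, ∑ j, if i < j then (Lmap c a i j x₀) * (Lmap c a i j (x - x₀)) else 0 := by
    simp [Dmap, ContinuousLinearMap.sum_apply,
      apply_ite (fun f : (Fin d → ℝ) →L[ℝ] ℝ => f (x - x₀))]
  rw [Gfun_eq, Gfun_eq, hD, ← Finset.sum_add_distrib, ← Finset.sum_add_distrib]
  refine Finset.sum_congr rfl fun i _ => ?_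
  rw [← Finset.sum_add_distrib, ← Finset.sum_add_distrib]
  refine Finset.sum_congr rfl fun j _ => ?_
  by_cases hij : i < j
  · simp only [if_pos hij]
    have hsub : Lmap c a i j (x - x₀) = Lmap c a i j x - Lmap c a i j x₀ := map_sub _ _ _
    rw [hsub]; ring
  · simp [hij]

lemma step_eq {cij ai aj hi hj : ℝ} (hc0 : 0 < cij) (hai : 0 < ai) (haj : 0 < aj)
    (heq : Real.sqrt (cij * aj / ai) * hi - Real.sqrt (cij * ai / aj) * hj = 0) :
    hi / ai = hj / aj := by
  have h1 : Real.sqrt (cij * aj / ai) = Real.sqrt cij * Real.sqrt aj / Real.sqrt ai := by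
    rw [Real.sqrt_div (by positivity), Real.sqrt_mul hc0.le]
  have h2 : Real.sqrt (cij * ai / aj) = Real.sqrt cij * Real.sqrt ai / Real.sqrt aj := by
    rw [Real.sqrt_div (by positivity), Real.sqrt_mul hc0.le]
  have hsc : 0 < Real.sqrt cij := Real.sqrt_pos.mpr hc0
  have hsi : 0 < Real.sqrt ai := Real.sqrt_pos.mpr hai
  have hsj : 0 < Real.sqrt aj := Real.sqrt_pos.mpr haj
  have hi2 : Real.sqrt ai * Real.sqrt ai = ai := Real.mul_self_sqrt hai.le
  have hj2 : Real.sqrt aj * Real.sqrt aj = aj := Real.mul_self_sqrt haj.le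
  rw [h1, h2] at heq
  field_simp at heq
  have h3 : Real.sqrt cij * (hi * aj - hj * ai) = 0 := by
    linear_combination heq - (Real.sqrt cij * hi) * hj2 + (Real.sqrt cij * hj) * hi2
  have h4 := (mul_eq_zero.mp h3).resolve_left hsc.ne'
  rw [div_eq_div_iff hai.ne' haj.ne']
  linarith

lemma La_zero {cij ai aj : ℝ} (hc0 : 0 ≤ cij) (hai : 0 < ai) (haj : 0 < aj) :
    Real.sqrt (cij * aj / ai) * ai - Real.sqrt (cij * ai / aj) * aj = 0 := by
  have e1 : Real.sqrt (cij * aj / ai) * ai = Real.sqrt (cij * aj * ai) := by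
    rw [show ai = Real.sqrt (ai ^ 2) from (Real.sqrt_sq hai.le).symm,
      ← Real.sqrt_mul (by positivity)]
    congr 1
    field_simp
    rw [Real.sqrt_sq hai.le]
  have e2 : Real.sqrt (cij * ai / aj) * aj = Real.sqrt (cij * ai * aj) := by
    rw [show aj = Real.sqrt (aj ^ 2) from (Real.sqrt_sq haj.le).symm,
      ← Real.sqrt_mul (by positivity)]
    congr 1
    field_simp
    rw [Real.sqrt_sq haj.le]
  rw [e1, e2, show cij * aj * ai = cij * ai * aj by ring, sub_self]

/-- Lemma: contact set of the tangent of `G`.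
If the nonnegative coefficients `c_{ij}` induce a connected graph on `{1,…,d}` and
`a_1,…,a_d > 0`, then the set where `G` coincides with its affine tangent at `x₀` is
exactly the line `x₀ + L`, where `L = span{a}`. -/
theorem tangent_contact_set {d : ℕ} (c : Fin d → Fin d → ℝ) (a : Fin d → ℝ)
    (hc : ∀ i j, i < j → 0 ≤ c i j) (ha : ∀ i, 0 < a i)
    (hconn : ∀ i j : Fin d, Relation.ReflTransGen (AdjRel c) i j)
    (x₀ : Fin d → ℝ) :
    {x : Fin d → ℝ | Gfun c a x = Gfun c a x₀ + fderiv ℝ (Gfun c a) x₀ (x - x₀)}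
      = {x : Fin d → ℝ | ∃ s : ℝ, x = x₀ + s • a} := by
  ext x
  simp only [Set.mem_setOf_eq]
  rw [(hasFDerivAt_Gfun c a x₀).fderiv]
  constructor
  · intro hx
    have hexp := expand c a x₀ x
    have hR : ∑ i, ∑ j, (if i < j then (1/2) * (Lmap c a i j (x - x₀))^2 else 0) = 0 := by
      linarith [hexp]
    have hnonneg : ∀ (i j : Fin d),
        (0:ℝ) ≤ if i < j then (1/2) * (Lmap c a i j (x - x₀))^2 else 0 := by
      intro i j
      split
      · positivity
      · exact le_refl 0
    have hterm : ∀ i j : Fin d, i < j → Lmap c a i j (x - x₀) = 0 := by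
      intro i j hij
      have h1 := (Finset.sum_eq_zero_iff_of_nonneg
        (fun i _ => Finset.sum_nonneg fun j _ => hnonneg i j)).mp hR i (Finset.mem_univ i)
      have h2 := (Finset.sum_eq_zero_iff_of_nonneg
        (fun j _ => hnonneg i j)).mp h1 j (Finset.mem_univ j)
      rw [if_pos hij] at h2
      have h3 : (Lmap c a i j (x - x₀)) ^ 2 = 0 := by linarith
      exact pow_eq_zero_iff (by norm_num : (2:ℕ) ≠ 0) |>.mp h3
    have hadj : ∀ i j : Fin d, AdjRel c i j →
        (x i - x₀ i) / a i = (x j - x₀ j) / a j := by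
      intro i j hij
      rcases hij with ⟨hlt, hpos⟩ | ⟨hlt, hpos⟩
      · have h0 := hterm i j hlt
        rw [Lmap_apply] at h0
        simp only [Pi.sub_apply] at h0
        exact step_eq hpos (ha i) (ha j) h0
      · have h0 := hterm j i hlt
        rw [Lmap_apply] at h0
        simp only [Pi.sub_apply] at h0
        exact (step_eq hpos (ha j) (ha i) h0).symm
    rcases Nat.eq_zero_or_pos d with hd | hd
    · exact ⟨0, funext fun i => absurd i.isLt (by omega)⟩
    · set i₀ : Fin d := ⟨0, hd⟩
      refine ⟨(x i₀ - x₀ i₀) / a i₀, ?_⟩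
      funext j
      have hall : (x j - x₀ j) / a j = (x i₀ - x₀ i₀) / a i₀ := by
        have hcj := hconn i₀ j
        induction hcj with
        | refl => rfl
        | tail hab hbc ih => exact (hadj _ _ hbc).symm.trans ih
      simp only [Pi.add_apply, Pi.smul_apply, smul_eq_mul]
      have h5 : x j - x₀ j = (x i₀ - x₀ i₀) / a i₀ * a j := by
        rw [← hall, div_mul_cancel₀ _ (ha j).ne']
      linarith
  · rintro ⟨s, rfl⟩
    rw [expand c a x₀ (x₀ + s • a)]
    have hR : ∑ i, ∑ j, (if i < j then
        (1/2) * (Lmap c a i j ((x₀ + s • a) - x₀))^2 else 0) = 0 := by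
      apply Finset.sum_eq_zero
      intro i _
      apply Finset.sum_eq_zero
      intro j _
      by_cases hij : i < j
      · rw [if_pos hij]
        have hsub : (x₀ + s • a) - x₀ = s • a := by abel
        have hLa : Lmap c a i j a = 0 := by
          rw [Lmap_apply]
          exact La_zero (hc i j hij) (ha i) (ha j)
        rw [hsub, map_smul, hLa]
        simp
      · rw [if_neg hij]
    rw [hR, add_zero]

end MMOT
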